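/- For ν > ν₀ > 0 and y₀ > 0, the function (3/5)·ν^{-4/3}·(ν^{10/3} - ν₀^{10/3})/(ν² - ν₀² + 3/y₀) equals 3/5 + (3/5)(ν₀²y₀ - 3)/(y₀ν²) + O(ν^{-10/3}) as ν → ∞; in particular, when y₀ = 3/ν₀² the expression equals (3/5)(1 - (ν₀/ν)^{10/3}) exactly. -/

import Mathlib

open Set

set_option maxHeartbeats 1600000 in
theorem spin7_instanton_asymptotics (ν₀ y₀ : ℝ) (hν₀ : 0 < ν₀) (hy₀ : 0 < y₀) :
    (∃ C > (0 : ℝ), ∃ M : ℝ, ∀ x ≥ M,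
      |3 / 5 * x ^ (-(4 : ℝ) / 3) * (x ^ ((10 : ℝ) / 3) - ν₀ ^ ((10 : ℝ) / 3)) /
          (x ^ 2 - ν₀ ^ 2 + 3 / y₀) -
        3 / 5 - 3 / 5 * (ν₀ ^ 2 * y₀ - 3) / (y₀ * x ^ 2)| ≤ C * x ^ (-(10 : ℝ) / 3)) ∧
    (y₀ = 3 / ν₀ ^ 2 → ∀ x > ν₀,
      3 / 5 * x ^ (-(4 : ℝ) / 3) * (x ^ ((10 : ℝ) / 3) - ν₀ ^ ((10 : ℝ) / 3)) /
          (x ^ 2 - ν₀ ^ 2 + 3 / y₀) =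
        3 / 5 * (1 - (ν₀ / x) ^ ((10 : ℝ) / 3))) := by
  set a := ν₀ ^ ((10 : ℝ)/3) with ha
  have ha0 : 0 < a := Real.rpow_pos_of_pos hν₀ _
  clear_value a
  set b := ν₀ ^ 2 - 3 / y₀ with hb
  clear_value b
  constructor
  · refine ⟨6/5*(b^2+a)+1, by positivity, max 1 (Real.sqrt (2*|b|) + 1), ?_⟩
    intro x hx
    have hx1 : (1:ℝ) ≤ x := le_trans (le_max_left _ _) hx
    have hx0 : (0:ℝ) < x := by linarith
    have hsx : Real.sqrt (2*|b|) ≤ x := by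
      have := le_trans (le_max_right _ _) hx; linarith
    have hbx : 2*|b| ≤ x^2 := by
      calc 2*|b| = Real.sqrt (2*|b|)^2 := (Real.sq_sqrt (by positivity)).symm
      _ ≤ x^2 := pow_le_pow_left₀ (Real.sqrt_nonneg _) hsx 2
    have hden : x^2/2 ≤ x^2 - b := by
      have : b ≤ |b| := le_abs_self b
      linarith
    have hden0 : 0 < x^2 - b := lt_of_lt_of_le (by positivity) hden
    set u := x ^ ((2:ℝ)/3) with hu
    have hu0 : 0 < u := Real.rpow_pos_of_pos hx0 _
    have hu2 : u^2 = x ^ ((4:ℝ)/3) := by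
      rw [hu, ← Real.rpow_natCast (x ^ ((2:ℝ)/3)) 2, ← Real.rpow_mul hx0.le]
      norm_num
    have h103 : x ^ ((10:ℝ)/3) = x^2 * u^2 := by
      rw [hu2, ← Real.rpow_natCast x 2, ← Real.rpow_add hx0]
      norm_num
    have hneg : x ^ (-(4:ℝ)/3) = (u^2)⁻¹ := by
      rw [hu2, ← Real.rpow_neg hx0.le]
      norm_num
    have hneg10 : x ^ (-(10:ℝ)/3) = (x^2*u^2)⁻¹ := by
      rw [← h103, ← Real.rpow_neg hx0.le]
      norm_num
    have hux : u ≤ x := by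
      calc u = x ^ ((2:ℝ)/3) := rfl
      _ ≤ x ^ (1:ℝ) := Real.rpow_le_rpow_of_exponent_le hx1 (by norm_num)
      _ = x := Real.rpow_one x
    have hden0' : x^2 - (ν₀^2 - 3/y₀) ≠ 0 := by rw [← hb]; exact hden0.ne'
    have h1 : x ^ 2 - ν₀ ^ 2 + 3 / y₀ = x^2 - b := by rw [hb]; ring
    have h2 : 3 / 5 * (ν₀ ^ 2 * y₀ - 3) / (y₀ * x ^ 2) = 3/5 * b / x^2 := by
      rw [hb]
      field_simp
    have hE : 3 / 5 * x ^ (-(4 : ℝ) / 3) * (x ^ ((10 : ℝ) / 3) - a) /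
          (x ^ 2 - ν₀ ^ 2 + 3 / y₀) -
        3 / 5 - 3 / 5 * (ν₀ ^ 2 * y₀ - 3) / (y₀ * x ^ 2)
        = 3/5 * (b^2*u^2 - a*x^2) / (u^2*x^2*(x^2-b)) := by
      rw [hneg, h103, h1, h2]
      field_simp [hu0.ne', hx0.ne', hden0.ne']
      ring
    rw [hE, hneg10, abs_div, abs_of_pos (by positivity : (0:ℝ) < u^2*x^2*(x^2-b)),
      div_le_iff₀ (by positivity)]
    have hu2x2 : u^2 ≤ x^2 := pow_le_pow_left₀ hu0.le hux 2
    have habs : |3/5 * (b^2*u^2 - a*x^2)| ≤ 3/5*(b^2+a)*x^2 := by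
      rw [abs_mul, abs_of_nonneg (by norm_num : (0:ℝ) ≤ 3/5)]
      have h2 : |b^2*u^2 - a*x^2| ≤ b^2*x^2 + a*x^2 := by
        calc |b^2*u^2 - a*x^2| ≤ |b^2*u^2| + |a*x^2| := abs_sub _ _
        _ = b^2*u^2 + a*x^2 := by
            rw [abs_of_nonneg (by positivity), abs_of_nonneg (by positivity)]
        _ ≤ b^2*x^2 + a*x^2 := by nlinarith [sq_nonneg b]
      calc 3/5 * |b^2*u^2 - a*x^2| ≤ 3/5 * (b^2*x^2 + a*x^2) := by linarith
      _ = 3/5*(b^2+a)*x^2 := by ring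
    have hrhs : (6/5*(b^2+a)+1) * (x^2*u^2)⁻¹ * (u^2*x^2*(x^2-b))
        = (6/5*(b^2+a)+1) * (x^2-b) := by
      field_simp
    rw [hrhs]
    have hC0 : (0:ℝ) ≤ 6/5*(b^2+a)+1 := by positivity
    have hmul := mul_le_mul_of_nonneg_left hden hC0
    have hfin : 3/5*(b^2+a)*x^2 ≤ (6/5*(b^2+a)+1) * (x^2-b) := by
      nlinarith [hmul, mul_nonneg (by positivity : (0:ℝ) ≤ b^2+a) (sq_nonneg x), sq_nonneg x]
    linarith [habs, hfin]
  · intro hy x hxν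
    have hx0 : 0 < x := lt_trans hν₀ hxν
    have h3y : 3 / y₀ = ν₀^2 := by rw [hy]; field_simp
    have hden : x ^ 2 - ν₀ ^ 2 + 3 / y₀ = x^2 := by rw [h3y]; ring
    have hP : (0:ℝ) < x ^ ((10:ℝ)/3) := Real.rpow_pos_of_pos hx0 _
    have h4 : x ^ (-(4:ℝ)/3) = x^2 / x^((10:ℝ)/3) := by
      rw [← Real.rpow_natCast x 2, ← Real.rpow_sub hx0]
      norm_num
    rw [hden, Real.div_rpow hν₀.le hx0.le, h4, ← ha]
    field_simp
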